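/- In the finite-dimensional discrete-spectrum clock setup, the time operator transforms under the clock evolution group according to U_C(s) ∘ T̂ ∘ U_C(s)⁻¹ = T̂ − s·id + ∫₀^s |t⟩⟨t| dt for every s ∈ ℝ, where the last term is the (signed, orientation-respecting) Bochner integral of the rank-one operator-valued function t ↦ |t⟩⟨t| over the interval from 0 to s. -/

import Mathlib

set_option maxHeartbeats 1000000

open MeasureTheory

noncomputable section

noncomputable def ketbra {H : Type*} [NormedAddCommGroup H] [InnerProductSpace ℂ H]
    (v w : H) : H →L[ℂ] H :=
  (ContinuousLinearMap.toSpanSingleton ℂ v).comp (innerSL ℂ w)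

section Aux
variable {H : Type*} [NormedAddCommGroup H] [InnerProductSpace ℂ H]

lemma ketbra_apply (v w ψ : H) : ketbra v w ψ = (inner ℂ w ψ : ℂ) • v := rfl

lemma ketbra_smul_left (c : ℂ) (v w : H) : ketbra (c • v) w = c • ketbra v w := by
  ext ψ; simp [ketbra_apply, smul_smul, mul_comm]

lemma ketbra_smul_right (c : ℂ) (v w : H) :
    ketbra v (c • w) = (starRingEnd ℂ) c • ketbra v w := by
  ext ψ; simp [ketbra_apply, inner_smul_left, smul_smul, mul_comm]

lemma ketbra_sum_left {ι : Type*} (S : Finset ι) (f : ι → H) (w : H) :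
    ketbra (∑ i ∈ S, f i) w = ∑ i ∈ S, ketbra (f i) w := by
  ext ψ; simp [ketbra_apply, Finset.smul_sum]

lemma ketbra_sum_right {ι : Type*} (S : Finset ι) (v : H) (f : ι → H) :
    ketbra v (∑ i ∈ S, f i) = ∑ i ∈ S, ketbra v (f i) := by
  ext ψ; simp [ketbra_apply, sum_inner, Finset.sum_smul]

lemma ketbra_adjoint [CompleteSpace H] (v w : H) :
    ContinuousLinearMap.adjoint (ketbra v w) = ketbra w v := by
  refine ((ContinuousLinearMap.eq_adjoint_iff (ketbra w v) (ketbra v w)).mpr ?_).symm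
  intro x y
  simp only [ketbra_apply, inner_smul_left, inner_smul_right, ← inner_conj_symm v x]
  rw [Complex.conj_conj]; ring

lemma exp_apply_eigenvector [CompleteSpace H] (A : H →L[ℂ] H) (v : H) (c : ℂ)
    (h : A v = c • v) : NormedSpace.exp A v = Complex.exp c • v := by
  have hpow : ∀ m : ℕ, (A ^ m) v = c ^ m • v := by
    intro m
    induction m with
    | zero => simp
    | succ k ih =>
      rw [pow_succ]
      simp only [ContinuousLinearMap.mul_apply, h, (A ^ k).map_smul, ih, smul_smul, pow_succ]
      ring_nf
  have hsA : Summable fun m : ℕ => ((m.factorial : ℂ)⁻¹) • A ^ m :=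
    NormedSpace.expSeries_summable' (𝕂 := ℂ) A
  have hsc : Summable fun m : ℕ => ((m.factorial : ℂ)⁻¹) • c ^ m :=
    NormedSpace.expSeries_summable' (𝕂 := ℂ) c
  calc NormedSpace.exp A v
      = (ContinuousLinearMap.apply ℂ H v) (∑' m : ℕ, ((m.factorial : ℂ)⁻¹) • A ^ m) := by
        rw [NormedSpace.exp_eq_tsum (𝕂 := ℂ)]; rfl
    _ = ∑' m : ℕ, ((m.factorial : ℂ)⁻¹) • (A ^ m) v := by
        rw [(ContinuousLinearMap.apply ℂ H v).map_tsum hsA]; rfl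
    _ = ∑' m : ℕ, (((m.factorial : ℂ)⁻¹) * c ^ m) • v := by
        simp [hpow, smul_smul]
    _ = (∑' m : ℕ, ((m.factorial : ℂ)⁻¹) * c ^ m) • v := by
        exact Summable.tsum_smul_const (by simpa [smul_eq_mul] using hsc) v
    _ = Complex.exp c • v := by
        congr 1
        rw [Complex.exp_eq_exp_ℂ, NormedSpace.exp_eq_tsum (𝕂 := ℂ)]
        simp [smul_eq_mul]

end Aux

/-- **Covariant transformation law of the time operator.**  For the finite-dimensional
discrete-spectrum clock with Hamiltonian `HC = Σ_j ε_j |b j⟩⟨b j|`, evolution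
`U t = exp(-i t HC)` (so `U (-s)` is the inverse of `U s`), covariant clock states
`|t⟩ = Σ_j e^{i g j} e^{-i ε_j t} b j`, and first-moment time operator
`T = (1/t_max) ∫₀^{t_max} t |t⟩⟨t| dt`, one has for every `s ∈ ℝ`:
`U(s) T U(s)⁻¹ = T - s·id + ∫₀^s |t⟩⟨t| dt`. -/
theorem time_operator_covariant_shift
    {H : Type*} [NormedAddCommGroup H] [InnerProductSpace ℂ H] [FiniteDimensional ℂ H]
    (n : ℕ) (hn : 1 ≤ n) (b : OrthonormalBasis (Fin n) ℂ H)
    (tmax φ : ℝ) (htmax : 0 < tmax)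
    (nj : Fin n → ℤ) (hnj : Function.Injective nj)
    (g : Fin n → ℝ)
    (ε : Fin n → ℝ) (hε : ∀ j, ε j = (2 * Real.pi * (nj j : ℝ) + φ) / tmax)
    (ct : ℝ → H)
    (hct : ∀ t : ℝ, ct t = ∑ j : Fin n,
      (Complex.exp (Complex.I * (g j : ℝ)) * Complex.exp (-Complex.I * (ε j : ℝ) * t)) • b j)
    (HC : H →L[ℂ] H) (hHC : HC = ∑ j : Fin n, ((ε j : ℝ) : ℂ) • ketbra (b j) (b j))
    (U : ℝ → (H →L[ℂ] H))
    (hU : ∀ t : ℝ, U t = NormedSpace.exp ((-(t : ℂ) * Complex.I) • HC))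
    (T : H →L[ℂ] H)
    (hT : T = (1 / tmax) • ∫ t in (0:ℝ)..tmax, t • ketbra (ct t) (ct t)) :
    ∀ s : ℝ, (U s).comp (T.comp (U (-s)))
      = T - s • (1 : H →L[ℂ] H) + ∫ t in (0:ℝ)..s, ketbra (ct t) (ct t) := by
  intro s
  haveI hcomp : CompleteSpace H := FiniteDimensional.complete ℂ H
  set K : ℝ → (H →L[ℂ] H) := fun t => ketbra (ct t) (ct t) with hKdef
  set cf : Fin n → ℝ → ℂ := fun j t =>
    Complex.exp (Complex.I * (g j : ℝ)) * Complex.exp (-Complex.I * (ε j : ℝ) * t) with hcf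
  -- orthonormality
  have hortho : ∀ i j : Fin n, (inner ℂ (b i) (b j) : ℂ) = if i = j then 1 else 0 := fun i j =>
    orthonormal_iff_ite.mp b.orthonormal i j
  -- eigenvectors of HC
  have hHCb : ∀ j, HC (b j) = ((ε j : ℝ) : ℂ) • b j := by
    intro j
    rw [hHC]
    simp only [ContinuousLinearMap.sum_apply, ContinuousLinearMap.smul_apply, ketbra_apply]
    rw [Finset.sum_eq_single j]
    · simp [hortho]
    · intro k _ hk; simp [hortho, hk]
    · simp
  have hUb : ∀ (u : ℝ) (j : Fin n),
      U u (b j) = Complex.exp (-(u : ℂ) * Complex.I * ((ε j : ℝ) : ℂ)) • b j := by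
    intro u j
    rw [hU]
    exact exp_apply_eigenvector _ _ _
      (by rw [ContinuousLinearMap.smul_apply, hHCb, smul_smul])
  have hUct : ∀ (u t : ℝ), U u (ct t) = ct (t + u) := by
    intro u t
    rw [hct t, hct (t + u), map_sum]
    refine Finset.sum_congr rfl fun j _ => ?_
    rw [(U u).map_smul, hUb, smul_smul, mul_assoc, ← Complex.exp_add]
    congr 2
    push_cast
    ring
  -- adjoints
  have hstarHC : star HC = HC := by
    rw [hHC, star_sum]
    refine Finset.sum_congr rfl fun j _ => ?_
    rw [star_smul, ContinuousLinearMap.star_eq_adjoint, ketbra_adjoint]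
    simp [Complex.star_def, Complex.conj_ofReal]
  have hadj : ∀ u : ℝ, ContinuousLinearMap.adjoint (U u) = U (-u) := by
    intro u
    rw [← ContinuousLinearMap.star_eq_adjoint, hU u, NormedSpace.star_exp, hU (-u)]
    congr 1
    rw [star_smul, hstarHC]
    congr 1
    simp [Complex.star_def, map_mul]
  -- conjugation of K
  have hconj : ∀ t : ℝ, (U s).comp ((K t).comp (U (-s))) = K (t + s) := by
    intro t
    ext ψ
    show U s ((ketbra (ct t) (ct t)) (U (-s) ψ)) = (ketbra (ct (t + s)) (ct (t + s))) ψ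
    rw [ketbra_apply, ketbra_apply, (U s).map_smul, hUct]
    congr 1
    rw [← hadj s, ContinuousLinearMap.adjoint_inner_right, hUct]
  -- continuity and integrability
  have hcont_ct : Continuous ct := by
    rw [funext hct]
    fun_prop
  have hcont_K : Continuous K := by
    have h1 : Continuous fun t => ContinuousLinearMap.toSpanSingleton ℂ (ct t) := by
      have hlip : LipschitzWith 1 (ContinuousLinearMap.toSpanSingleton ℂ : H → ℂ →L[ℂ] H) := by
        apply LipschitzWith.of_dist_le_mul
        intro x y
        rw [dist_eq_norm, dist_eq_norm]
        have hd : ContinuousLinearMap.toSpanSingleton ℂ x - ContinuousLinearMap.toSpanSingleton ℂ y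
            = ContinuousLinearMap.toSpanSingleton ℂ (x - y) := by
          ext c; simp [ContinuousLinearMap.toSpanSingleton_apply, smul_sub]
        rw [hd, ContinuousLinearMap.norm_toSpanSingleton]
        simp
      exact hlip.continuous.comp hcont_ct
    have h2 : Continuous fun t => innerSL ℂ (ct t) := (innerSL ℂ).continuous.comp hcont_ct
    exact h1.clm_comp h2
  have hint_K : ∀ a c : ℝ, IntervalIntegrable K volume a c := fun a c =>
    hcont_K.intervalIntegrable a c
  have hcont_tK : Continuous fun t : ℝ => t • K t := continuous_id.smul hcont_K
  have hint_tK : ∀ a c : ℝ, IntervalIntegrable (fun t : ℝ => t • K t) volume a c := fun a c =>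
    hcont_tK.intervalIntegrable a c
  -- resolution of identity
  have hone : ∑ j : Fin n, ketbra (b j) (b j) = (1 : H →L[ℂ] H) := by
    ext ψ
    simp only [ContinuousLinearMap.sum_apply, ketbra_apply, ContinuousLinearMap.one_apply]
    exact b.sum_repr' ψ
  have hεT : ∀ j, (ε j) * tmax = 2 * Real.pi * (nj j : ℝ) + φ := by
    intro j; rw [hε]; field_simp
  have hεinj : Function.Injective ε := by
    intro j k h
    apply hnj
    have h2 : 2 * Real.pi * (nj j : ℝ) + φ = 2 * Real.pi * (nj k : ℝ) + φ := by
      rw [← hεT j, ← hεT k, h]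
    have h3 : (nj j : ℝ) = (nj k : ℝ) := by
      have hpi := Real.pi_pos
      nlinarith
    exact_mod_cast h3
  -- scalar integrals
  have hscal : ∀ j k : Fin n,
      (∫ t in (0:ℝ)..tmax, cf j t * (starRingEnd ℂ) (cf k t))
        = if j = k then (tmax : ℂ) else 0 := by
    intro j k
    have hco : ∀ t : ℝ, cf j t * (starRingEnd ℂ) (cf k t)
        = Complex.exp (Complex.I * (g j : ℝ) - Complex.I * (g k : ℝ))
          * Complex.exp ((Complex.I * (((ε k : ℝ) : ℂ) - ((ε j : ℝ) : ℂ))) * t) := by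
      intro t
      rw [hcf]
      simp only [map_mul, ← Complex.exp_conj, map_sub, map_neg, Complex.conj_I,
        Complex.conj_ofReal]
      rw [← Complex.exp_add, ← Complex.exp_add, ← Complex.exp_add, ← Complex.exp_add]
      congr 1
      ring
    rw [intervalIntegral.integral_congr (fun t _ => hco t),
      intervalIntegral.integral_const_mul]
    rcases eq_or_ne j k with rfl | hjk
    · simp
    · have hc0 : Complex.I * (((ε k : ℝ) : ℂ) - ((ε j : ℝ) : ℂ)) ≠ 0 := by
        apply mul_ne_zero Complex.I_ne_zero
        rw [sub_ne_zero]
        intro hek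
        exact hjk (hεinj (Complex.ofReal_injective hek)).symm
      rw [integral_exp_mul_complex hc0]
      have hcT : Complex.I * (((ε k : ℝ) : ℂ) - ((ε j : ℝ) : ℂ)) * (tmax : ℂ)
          = ((nj k - nj j : ℤ) : ℂ) * (2 * (Real.pi : ℂ) * Complex.I) := by
        have hr : (ε k - ε j) * tmax = 2 * Real.pi * ((nj k : ℝ) - (nj j : ℝ)) := by
          rw [sub_mul, hεT, hεT]; ring
        have hrc : (((ε k - ε j) * tmax : ℝ) : ℂ)
            = ((2 * Real.pi * ((nj k : ℝ) - (nj j : ℝ)) : ℝ) : ℂ) := by exact congrArg Complex.ofReal hr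
        push_cast at hrc ⊢
        linear_combination Complex.I * hrc
      rw [hcT, Complex.exp_int_mul_two_pi_mul_I]
      simp [hjk]
  -- expansion of K and the resolution integral
  have hKexp : ∀ t : ℝ, K t = ∑ j : Fin n, ∑ k : Fin n,
      (cf j t * (starRingEnd ℂ) (cf k t)) • ketbra (b j) (b k) := by
    intro t
    show ketbra (ct t) (ct t) = _
    rw [hct t, ketbra_sum_left]
    refine Finset.sum_congr rfl fun j _ => ?_
    rw [ketbra_smul_left, ketbra_sum_right, Finset.smul_sum]
    refine Finset.sum_congr rfl fun k _ => ?_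
    rw [ketbra_smul_right, smul_smul]
  have hcfc : ∀ j : Fin n, Continuous (cf j) := by
    intro j
    show Continuous fun t : ℝ =>
      Complex.exp (Complex.I * ((g j : ℝ) : ℂ)) * Complex.exp (-Complex.I * ((ε j : ℝ) : ℂ) * (t : ℂ))
    fun_prop
  have hcont_cf : ∀ j k : Fin n, Continuous fun t => cf j t * (starRingEnd ℂ) (cf k t) := by
    intro j k
    exact (hcfc j).mul (continuous_star.comp (hcfc k))
  have hres : (∫ t in (0:ℝ)..tmax, K t) = tmax • (1 : H →L[ℂ] H) := by
    rw [intervalIntegral.integral_congr (fun t _ => hKexp t)]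
    rw [intervalIntegral.integral_finset_sum]
    swap
    · intro j _
      apply Continuous.intervalIntegrable
      exact continuous_finset_sum _ fun k _ => ((hcont_cf j k).smul continuous_const)
    have : ∀ j : Fin n, (∫ t in (0:ℝ)..tmax,
        ∑ k : Fin n, (cf j t * (starRingEnd ℂ) (cf k t)) • ketbra (b j) (b k))
        = (tmax : ℂ) • ketbra (b j) (b j) := by
      intro j
      rw [intervalIntegral.integral_finset_sum]
      swap
      · intro k _
        exact ((hcont_cf j k).smul continuous_const).intervalIntegrable _ _
      rw [Finset.sum_eq_single j]
      · rw [intervalIntegral.integral_smul_const, hscal]; simp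
      · intro k _ hk
        rw [intervalIntegral.integral_smul_const, hscal]
        simp [Ne.symm hk]
      · simp
    rw [Finset.sum_congr rfl fun j _ => this j]
    rw [← Finset.smul_sum, hone]
    exact Complex.coe_smul tmax 1
  -- periodicity
  have hctper : ∀ t : ℝ, ct (t + tmax) = Complex.exp (-Complex.I * (φ : ℂ)) • ct t := by
    intro t
    rw [hct t, hct (t + tmax), Finset.smul_sum]
    refine Finset.sum_congr rfl fun j _ => ?_
    rw [smul_smul]
    congr 1
    have hrc : (((ε j) * tmax : ℝ) : ℂ) = ((2 * Real.pi * (nj j : ℝ) + φ : ℝ) : ℂ) :=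
      congrArg _ (hεT j)
    push_cast at hrc
    have harg : -Complex.I * ((ε j : ℝ) : ℂ) * (((t + tmax : ℝ)) : ℂ)
        = (-Complex.I * (φ : ℂ)) + (-Complex.I * ((ε j : ℝ) : ℂ) * (t : ℂ))
          + ((-(nj j) : ℤ) : ℂ) * (2 * (Real.pi : ℂ) * Complex.I) := by
      push_cast
      linear_combination (-Complex.I) * hrc
    rw [harg, Complex.exp_add, Complex.exp_int_mul_two_pi_mul_I, mul_one, Complex.exp_add]
    ring
  have hKper : Function.Periodic K tmax := by
    intro t
    show ketbra (ct (t + tmax)) (ct (t + tmax)) = ketbra (ct t) (ct t)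
    rw [hctper, ketbra_smul_left, ketbra_smul_right, smul_smul, ← Complex.exp_conj]
    rw [← Complex.exp_add]
    simp
  -- main assembly
  set Φ : (H →L[ℂ] H) →L[ℂ] (H →L[ℂ] H) :=
    ((ContinuousLinearMap.compL ℂ H H H) (U s)).comp
      ((ContinuousLinearMap.compL ℂ H H H).flip (U (-s))) with hΦ
  have hΦA : ∀ A : H →L[ℂ] H, Φ A = (U s).comp (A.comp (U (-s))) := fun A => rfl
  have step1 : (U s).comp (T.comp (U (-s)))
      = (1 / tmax) • ∫ t in (0:ℝ)..tmax, t • K (t + s) := by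
    rw [← hΦA, hT, Φ.map_smul_of_tower]
    congr 1
    rw [show (∫ t in (0:ℝ)..tmax, t • ketbra (ct t) (ct t)) = ∫ t in (0:ℝ)..tmax, t • K t
      from rfl]
    rw [← Φ.intervalIntegral_comp_comm (hint_tK 0 tmax)]
    refine intervalIntegral.integral_congr fun t _ => ?_
    rw [Φ.map_smul_of_tower, hΦA, hconj]
  have step2 : (∫ t in (0:ℝ)..tmax, t • K (t + s))
      = ∫ u in s..(tmax + s), (u - s) • K u := by
    calc (∫ t in (0:ℝ)..tmax, t • K (t + s))
        = ∫ t in (0:ℝ)..tmax, ((t + s) - s) • K (t + s) := by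
          refine intervalIntegral.integral_congr fun t _ => ?_
          simp
      _ = ∫ u in ((0:ℝ) + s)..(tmax + s), (u - s) • K u :=
          intervalIntegral.integral_comp_add_right (fun u => (u - s) • K u) s
      _ = ∫ u in s..(tmax + s), (u - s) • K u := by rw [zero_add]
  have hIper : (∫ u in s..(tmax + s), K u) = tmax • (1 : H →L[ℂ] H) := by
    rw [add_comm tmax s, hKper.intervalIntegral_add_eq s 0, zero_add, hres]
  have hshift : (∫ u in tmax..(tmax + s), u • K u)
      = (∫ u in (0:ℝ)..s, u • K u) + tmax • ∫ u in (0:ℝ)..s, K u := by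
    have h1 : (∫ u in (0:ℝ)..s, (u + tmax) • K (u + tmax))
        = ∫ u in (0 + tmax)..(s + tmax), u • K u :=
      intervalIntegral.integral_comp_add_right (fun u => u • K u) tmax
    rw [zero_add, add_comm s tmax] at h1
    rw [← h1]
    rw [intervalIntegral.integral_congr
      (show Set.EqOn (fun u => (u + tmax) • K (u + tmax)) (fun u => u • K u + tmax • K u)
        (Set.uIcc 0 s) from fun u _ => by simp only [hKper u, add_smul])]
    rw [intervalIntegral.integral_add (g := fun u => tmax • K u) (hint_tK 0 s)
      ((hcont_K.const_smul tmax).intervalIntegrable 0 s :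
        IntervalIntegrable (fun u => tmax • K u) volume 0 s)]
    rw [intervalIntegral.integral_smul]
  have hsplitA : (∫ u in s..(tmax + s), u • K u)
      = (∫ u in (0:ℝ)..tmax, u • K u) + tmax • ∫ u in (0:ℝ)..s, K u := by
    have hA : (∫ u in s..(0:ℝ), u • K u) + (∫ u in (0:ℝ)..(tmax + s), u • K u)
        = ∫ u in s..(tmax + s), u • K u :=
      intervalIntegral.integral_add_adjacent_intervals (hint_tK s 0) (hint_tK 0 (tmax + s))
    have hB : (∫ u in (0:ℝ)..tmax, u • K u) + (∫ u in tmax..(tmax + s), u • K u)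
        = ∫ u in (0:ℝ)..(tmax + s), u • K u :=
      intervalIntegral.integral_add_adjacent_intervals (hint_tK 0 tmax) (hint_tK tmax (tmax + s))
    rw [← hA, ← hB, hshift, intervalIntegral.integral_symm 0 s]
    abel
  have hsub : (∫ u in s..(tmax + s), (u - s) • K u)
      = (∫ u in s..(tmax + s), u • K u) - s • ∫ u in s..(tmax + s), K u := by
    rw [intervalIntegral.integral_congr
      (show Set.EqOn (fun u => (u - s) • K u) (fun u => u • K u - s • K u)
        (Set.uIcc s (tmax + s)) from fun u _ => sub_smul u s (K u))]
    rw [intervalIntegral.integral_sub (g := fun u => s • K u) (hint_tK s (tmax + s))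
      ((hcont_K.const_smul s).intervalIntegrable s (tmax + s) :
        IntervalIntegrable (fun u => s • K u) volume s (tmax + s))]
    rw [intervalIntegral.integral_smul]
  have hTK : T = (1 / tmax) • ∫ u in (0:ℝ)..tmax, u • K u := hT
  have hgoalK : (∫ t in (0:ℝ)..s, ketbra (ct t) (ct t)) = ∫ t in (0:ℝ)..s, K t := rfl
  rw [step1, step2, hsub, hsplitA, hIper, hTK, hgoalK]
  have hne : tmax ≠ 0 := ne_of_gt htmax
  match_scalars <;> field_simp

end
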